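/- Let ε ∈ (0,1). Then for all complex numbers x₁, x₂ ∈ ℂ, |Im[(log(ε+|x₁|²)·x₁ − log(ε+|x₂|²)·x₂)·(conj(x₁) − conj(x₂))]| ≤ 4·|x₁ − x₂|². -/

import Mathlib

open Complex

/-- Auxiliary lemma: the key estimate assuming `|x₂| ≤ |x₁|`. -/
lemma stmt_1_aux (ε : ℝ) (hε : 0 < ε) (x₁ x₂ : ℂ) (h : ‖x₂‖ ≤ ‖x₁‖) :
    |Real.log (ε + ‖x₁‖ ^ 2) - Real.log (ε + ‖x₂‖ ^ 2)| *
      |(x₁ * starRingEnd ℂ x₂).im| ≤ 4 * ‖x₁ - x₂‖ ^ 2 := by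
  set r₁ := ‖x₁‖ with hr₁
  set r₂ := ‖x₂‖ with hr₂
  have hr₂0 : 0 ≤ r₂ := norm_nonneg _
  rcases eq_or_lt_of_le hr₂0 with h0 | h0
  · -- x₂ = 0
    have hx₂ : x₂ = 0 := by
      rw [← norm_eq_zero]; exact h0.symm ▸ rfl
    simp [hx₂]
  · -- 0 < r₂
    have hp₂ : (0:ℝ) < ε + r₂ ^ 2 := by positivity
    have hp₁ : (0:ℝ) < ε + r₁ ^ 2 := by positivity
    have hd : ‖x₁ - x₂‖ = ‖x₁ - x₂‖ := rfl
    set d := ‖x₁ - x₂‖ with hdd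
    have hd0 : 0 ≤ d := norm_nonneg _
    -- bound on the imaginary part
    have hIm : |(x₁ * starRingEnd ℂ x₂).im| ≤ d * r₂ := by
      have hsplit : x₁ * starRingEnd ℂ x₂
          = (x₁ - x₂) * starRingEnd ℂ x₂ + x₂ * starRingEnd ℂ x₂ := by ring
      have him : (x₁ * starRingEnd ℂ x₂).im = ((x₁ - x₂) * starRingEnd ℂ x₂).im := by
        rw [hsplit, Complex.add_im, Complex.mul_conj]
        simp
      rw [him]
      calc |((x₁ - x₂) * starRingEnd ℂ x₂).im| ≤ ‖(x₁ - x₂) * starRingEnd ℂ x₂‖ :=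
            Complex.abs_im_le_norm _
        _ = d * r₂ := by rw [norm_mul, Complex.norm_conj]
    -- bound on the logarithm difference
    have hr1r2 : r₁ - r₂ ≤ d := by
      have := norm_add_le (x₁ - x₂) x₂
      simp only [sub_add_cancel] at this
      linarith
    have hlog_nonneg : 0 ≤ Real.log (ε + r₁ ^ 2) - Real.log (ε + r₂ ^ 2) := by
      have : Real.log (ε + r₂ ^ 2) ≤ Real.log (ε + r₁ ^ 2) := by
        apply Real.log_le_log hp₂
        nlinarith [mul_le_mul_of_nonneg_left h h0.le]
      linarith
    have hlog : Real.log (ε + r₁ ^ 2) - Real.log (ε + r₂ ^ 2) ≤ 2 * (r₁ - r₂) / r₂ := by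
      have e1 : Real.log (ε + r₁ ^ 2) - Real.log (ε + r₂ ^ 2)
          = Real.log ((ε + r₁ ^ 2) / (ε + r₂ ^ 2)) := (Real.log_div hp₁.ne' hp₂.ne').symm
      have e2 : (ε + r₁ ^ 2) / (ε + r₂ ^ 2) ≤ (r₁ / r₂) ^ 2 := by
        have hsq : r₂ ^ 2 ≤ r₁ ^ 2 := by nlinarith
        rw [div_pow, div_le_div_iff₀ hp₂ (by positivity)]
        nlinarith [mul_le_mul_of_nonneg_left hsq hε.le]
      have e3 : Real.log ((ε + r₁ ^ 2) / (ε + r₂ ^ 2)) ≤ Real.log ((r₁ / r₂) ^ 2) :=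
        Real.log_le_log (by positivity) e2
      have e4 : Real.log ((r₁ / r₂) ^ 2) = 2 * Real.log (r₁ / r₂) := by
        rw [Real.log_pow]; push_cast; ring
      have e5 : Real.log (r₁ / r₂) ≤ r₁ / r₂ - 1 :=
        Real.log_le_sub_one_of_pos (div_pos (lt_of_lt_of_le h0 h) h0)
      have e6 : r₁ / r₂ - 1 = (r₁ - r₂) / r₂ := by field_simp
      rw [e1]
      calc Real.log ((ε + r₁ ^ 2) / (ε + r₂ ^ 2)) ≤ 2 * Real.log (r₁ / r₂) := by
            rw [← e4]; exact e3
        _ ≤ 2 * ((r₁ - r₂) / r₂) := by rw [← e6]; linarith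
        _ = 2 * (r₁ - r₂) / r₂ := by ring
    have habs : |Real.log (ε + r₁ ^ 2) - Real.log (ε + r₂ ^ 2)| ≤ 2 * (r₁ - r₂) / r₂ := by
      rw [_root_.abs_of_nonneg hlog_nonneg]; exact hlog
    calc |Real.log (ε + r₁ ^ 2) - Real.log (ε + r₂ ^ 2)| * |(x₁ * starRingEnd ℂ x₂).im|
        ≤ (2 * (r₁ - r₂) / r₂) * (d * r₂) := by
          apply mul_le_mul habs hIm (abs_nonneg _)
          apply div_nonneg (by linarith) h0.le
      _ = 2 * (r₁ - r₂) * d := by field_simp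
      _ ≤ 2 * d * d := by nlinarith
      _ ≤ 4 * d ^ 2 := by nlinarith

/-- For `ε ∈ (0,1)` and all `x₁ x₂ ∈ ℂ`,
`|Im[(log(ε+|x₁|²)x₁ − log(ε+|x₂|²)x₂)(conj x₁ − conj x₂)]| ≤ 4|x₁ − x₂|²`. -/
theorem stmt_1 (ε : ℝ) (hε : ε ∈ Set.Ioo (0:ℝ) 1) (x₁ x₂ : ℂ) :
    |(((Real.log (ε + ‖x₁‖ ^ 2) : ℂ) * x₁ -
        (Real.log (ε + ‖x₂‖ ^ 2) : ℂ) * x₂) *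
       (starRingEnd ℂ x₁ - starRingEnd ℂ x₂)).im| ≤
      4 * ‖x₁ - x₂‖ ^ 2 := by
  obtain ⟨hε0, -⟩ := hε
  set L₁ := Real.log (ε + ‖x₁‖ ^ 2) with hL₁
  set L₂ := Real.log (ε + ‖x₂‖ ^ 2) with hL₂
  have key : (((L₁ : ℂ) * x₁ - (L₂ : ℂ) * x₂) * (starRingEnd ℂ x₁ - starRingEnd ℂ x₂)).im
      = (L₂ - L₁) * (x₁ * starRingEnd ℂ x₂).im := by
    simp only [Complex.sub_im, Complex.mul_im, Complex.sub_re, Complex.mul_re,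
      Complex.conj_re, Complex.conj_im, Complex.ofReal_re, Complex.ofReal_im]
    ring
  rw [key, abs_mul]
  rcases le_total (‖x₂‖) (‖x₁‖) with h | h
  · have := stmt_1_aux ε hε0 x₁ x₂ h
    rw [abs_sub_comm]
    exact this
  · have := stmt_1_aux ε hε0 x₂ x₁ h
    have him : |(x₂ * starRingEnd ℂ x₁).im| = |(x₁ * starRingEnd ℂ x₂).im| := by
      have : x₂ * starRingEnd ℂ x₁ = starRingEnd ℂ (x₁ * starRingEnd ℂ x₂) := by
        rw [map_mul, Complex.conj_conj]; ring
      rw [this, Complex.conj_im, abs_neg]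
    have hab : ‖x₂ - x₁‖ = ‖x₁ - x₂‖ := by rw [← neg_sub x₁ x₂, norm_neg]
    rw [him, hab] at this
    exact this
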